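/- Let C ⊆ [0,1]^X be a real-valued concept class, and let C_Y = {g_c : c ∈ C} ⊆ {0,1}^{X×[0,1]} with g_c(x,y) = 1[c(x) = y]. If C_Y admits a stable infinitized sample compression scheme of size at most k, or a stable inflated compression scheme of size at most k, then C admits a stable exact realizable sample compression scheme of size at most k. -/
import Mathlib


universe u

/-- A finite sample `S` is realizable by the concept class `C`. -/
def Realizable {X Y : Type*} (C : Set (X → Y)) (S : List (X × Y)) : Prop :=
  ∃ c ∈ C, ∀ p ∈ S, c p.1 = p.2

/-- `(κ, ρ)` is an exact realizable sample compression scheme for `C` of size at most `k`. -/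
def IsExactRealizableScheme {X Y : Type*} (C : Set (X → Y)) (k : ℕ)
    (κ : List (X × Y) → List (X × Y) × List Bool)
    (ρ : List (X × Y) × List Bool → X → Y) : Prop :=
  (∀ S : List (X × Y), (κ S).1 ⊆ S) ∧
  (∀ S : List (X × Y), Realizable C S → (κ S).1.length + (κ S).2.length ≤ k) ∧
  (∀ S : List (X × Y), Realizable C S → ∀ p ∈ S, ρ (κ S) p.1 = p.2)

/-- A compression function on finite samples is stable. -/
def IsStable {X Y : Type*} (C : Set (X → Y))
    (κ : List (X × Y) → List (X × Y) × List Bool) : Prop :=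
  ∀ S T : List (X × Y), Realizable C S → (κ S).1 ⊆ T → T ⊆ S → κ T = κ S

/-- A (possibly infinite) sample `S` is realizable by the concept class `C`. -/
def RealizableSet {X Y : Type*} (C : Set (X → Y)) (S : Set (X × Y)) : Prop :=
  ∃ c ∈ C, ∀ p ∈ S, c p.1 = p.2

/-- `(κ, ρ)` is an infinitized sample compression scheme for `C` of size at most `k`. -/
def IsInfinitizedScheme {X Y : Type*} (C : Set (X → Y)) (k : ℕ)
    (κ : Set (X × Y) → List (X × Y) × List Bool)
    (ρ : List (X × Y) × List Bool → X → Y) : Prop :=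
  (∀ S : Set (X × Y), ∀ p ∈ (κ S).1, p ∈ S) ∧
  (∀ S : Set (X × Y), RealizableSet C S → (κ S).1.length + (κ S).2.length ≤ k) ∧
  (∀ S : Set (X × Y), RealizableSet C S → ∀ p ∈ S, ρ (κ S) p.1 = p.2)

/-- An infinitized compression function is stable. -/
def IsStableInf {X Y : Type*} (C : Set (X → Y))
    (κ : Set (X × Y) → List (X × Y) × List Bool) : Prop :=
  ∀ S T : Set (X × Y), RealizableSet C S → (∀ p ∈ (κ S).1, p ∈ T) → T ⊆ S → κ T = κ S

/-- The examples of `S ⊆ (X × Y) × {0,1}` involve only finitely many distinct `x ∈ X`. -/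
def FinSupportX {X Y : Type*} (S : Set ((X × Y) × Bool)) : Prop :=
  Set.Finite {x : X | ∃ (y : Y) (z : Bool), ((x, y), z) ∈ S}

/-- `(κ, ρ)` is an inflated compression scheme for the binary class `H ⊆ {0,1}^{X×Y}`
of size at most `k`. -/
def IsInflatedScheme {X Y : Type*} (H : Set (X × Y → Bool)) (k : ℕ)
    (κ : Set ((X × Y) × Bool) → List ((X × Y) × Bool) × List Bool)
    (ρ : List ((X × Y) × Bool) × List Bool → X × Y → Bool) : Prop :=
  (∀ S : Set ((X × Y) × Bool), ∀ p ∈ (κ S).1, p ∈ S) ∧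
  (∀ S : Set ((X × Y) × Bool), RealizableSet H S → FinSupportX S →
    (κ S).1.length + (κ S).2.length ≤ k) ∧
  (∀ S : Set ((X × Y) × Bool), RealizableSet H S → FinSupportX S →
    ∀ p ∈ S, ρ (κ S) p.1 = p.2)

/-- An inflated compression function is stable. -/
def IsStableInflated {X Y : Type*} (H : Set (X × Y → Bool))
    (κ : Set ((X × Y) × Bool) → List ((X × Y) × Bool) × List Bool) : Prop :=
  ∀ S T : Set ((X × Y) × Bool), RealizableSet H S → FinSupportX S →
    (∀ p ∈ (κ S).1, p ∈ T) → T ⊆ S → κ T = κ S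

/-- The binary class `C_Y = {g_c : c ∈ C}` over the domain `X × [0,1]`,
where `g_c (x, y) = 1[c x = y]`, for a real-valued class `C ⊆ [0,1]^X`. -/
def CYr {X : Type*} (C : Set (X → ℝ)) : Set (X × Set.Icc (0:ℝ) 1 → Bool) :=
  {g | ∃ c ∈ C, ∀ p : X × Set.Icc (0:ℝ) 1, (g p = true ↔ c p.1 = (p.2 : ℝ))}

/-- The infinitized sample associated to a finite sample: for each example `(x, y)`
and each `y₂ ∈ [0,1]`, the binary example `((x, y₂), 1[y₂ = y])`. -/
def Tset {X : Type u} (L : List (X × ℝ)) : Set ((X × Set.Icc (0:ℝ) 1) × Bool) :=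
  {p | ∃ q ∈ L, p.1.1 = q.1 ∧ (p.2 = true ↔ (p.1.2 : ℝ) = q.2)}

/-- The label that a sample `S` assigns to `x` (well-defined for realizable samples). -/
noncomputable def yval {X : Type u} (S : List (X × ℝ)) (x : X) : ℝ :=
  sSup {y | (x, y) ∈ S}

lemma Tset_mono {X : Type u} {L L' : List (X × ℝ)} (h : L ⊆ L') : Tset L ⊆ Tset L' := by
  rintro p ⟨q, hq, h1, h2⟩
  exact ⟨q, h hq, h1, h2⟩

lemma Tset_finSupp {X : Type u} (L : List (X × ℝ)) : FinSupportX (Tset L) := by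
  apply Set.Finite.subset ((L.finite_toSet).image Prod.fst)
  rintro x ⟨y, z, q, hq, h1, -⟩
  exact ⟨q, hq, h1.symm⟩

lemma yval_eq {X : Type u} {C : Set (X → ℝ)} {S : List (X × ℝ)}
    (hS : Realizable C S) {x : X} {y : ℝ} (hxy : (x, y) ∈ S) : yval S x = y := by
  obtain ⟨c, -, hc⟩ := hS
  have : {y' | (x, y') ∈ S} = {y} := by
    ext y'
    simp only [Set.mem_setOf_eq, Set.mem_singleton_iff]
    constructor
    · intro h
      have h1 := hc _ h
      have h2 := hc _ hxy
      simp only at h1 h2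
      rw [← h1, h2]
    · rintro rfl; exact hxy
  rw [yval, this, csSup_singleton]

lemma Tset_realizable {X : Type u} {C : Set (X → ℝ)} {S : List (X × ℝ)}
    {c : X → ℝ} (hcC : c ∈ C) (hc : ∀ p ∈ S, c p.1 = p.2) :
    RealizableSet (CYr C) (Tset S) := by
  refine ⟨fun p => decide (c p.1 = (p.2 : ℝ)), ⟨c, hcC, fun p => by simp⟩, ?_⟩
  rintro ⟨⟨x, y₂⟩, b⟩ ⟨q, hq, h1, h2⟩
  have hcq := hc q hq
  simp only at h1
  subst h1
  simp only [decide_eq_true_eq] at *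
  rcases b with _ | _
  · simp only [Bool.false_eq_true, false_iff] at h2
    simp only [decide_eq_false_iff_not]
    rw [hcq]
    exact fun h => h2 h.symm
  · simp only [true_iff] at h2
    simp [hcq, h2]

/-- The core construction, done uniformly for both cases. -/
lemma exact_stable_of_binary {X : Type u}
    (C : Set (X → ℝ)) (hC : ∀ c ∈ C, ∀ x, c x ∈ Set.Icc (0:ℝ) 1) (k : ℕ)
    (κb : Set ((X × Set.Icc (0:ℝ) 1) × Bool) →
      List ((X × Set.Icc (0:ℝ) 1) × Bool) × List Bool)
    (ρb : List ((X × Set.Icc (0:ℝ) 1) × Bool) × List Bool → X × Set.Icc (0:ℝ) 1 → Bool)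
    (P1 : ∀ S, ∀ p ∈ (κb S).1, p ∈ S)
    (P2 : ∀ S, RealizableSet (CYr C) S → FinSupportX S →
      (κb S).1.length + (κb S).2.length ≤ k)
    (P3 : ∀ S, RealizableSet (CYr C) S → FinSupportX S → ∀ p ∈ S, ρb (κb S) p.1 = p.2)
    (P4 : ∀ S T, RealizableSet (CYr C) S → FinSupportX S →
      (∀ p ∈ (κb S).1, p ∈ T) → T ⊆ S → κb T = κb S) :
    ∃ κ ρ, IsExactRealizableScheme C k κ ρ ∧ IsStable C κ := by
  classical
  set κ : List (X × ℝ) → List (X × ℝ) × List Bool := fun S =>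
    if Realizable C S then
      ((κb (Tset S)).1.map (fun p => (p.1.1, yval S p.1.1)), (κb (Tset S)).2)
    else ([], []) with hκ
  set ρ : List (X × ℝ) × List Bool → X → ℝ := fun d x =>
    sSup {y : ℝ | ∃ hy : y ∈ Set.Icc (0:ℝ) 1,
      ρb (κb (Tset d.1)) (x, ⟨y, hy⟩) = true} with hρ
  -- the compressed list is a subsample
  have key_mem : ∀ S : List (X × ℝ), Realizable C S →
      ∀ p ∈ (κb (Tset S)).1, (p.1.1, yval S p.1.1) ∈ S := by
    intro S hS p hp
    obtain ⟨q, hq, h1, -⟩ := P1 _ p hp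
    have : yval S p.1.1 = q.2 := by rw [h1]; exact yval_eq hS hq
    rw [this, h1]
    exact hq
  have hsub : ∀ S : List (X × ℝ), (κ S).1 ⊆ S := by
    intro S
    rw [hκ]
    by_cases hS : Realizable C S
    · simp only [if_pos hS]
      intro a ha
      obtain ⟨p, hp, rfl⟩ := List.mem_map.mp ha
      exact key_mem S hS p hp
    · simp [if_neg hS]
  -- stability on the binary side: the compressed list is recoverable from the subsample
  have key_stab : ∀ S T : List (X × ℝ), Realizable C S → (κ S).1 ⊆ T → T ⊆ S →
      κb (Tset T) = κb (Tset S) := by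
    intro S T hS hST hTS
    obtain ⟨c, hcC, hc⟩ := hS
    have hSre : Realizable C S := ⟨c, hcC, hc⟩
    apply P4 _ _ (Tset_realizable hcC hc) (Tset_finSupp S) _ (Tset_mono hTS)
    intro p hp
    obtain ⟨q, hq, h1, h2⟩ := P1 _ p hp
    have hyq : yval S p.1.1 = q.2 := by rw [h1]; exact yval_eq hSre hq
    have hmem : (p.1.1, yval S p.1.1) ∈ T := by
      apply hST
      rw [hκ]
      simp only [if_pos hSre, List.mem_map]
      exact ⟨p, hp, rfl⟩
    refine ⟨(p.1.1, yval S p.1.1), hmem, rfl, ?_⟩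
    show p.2 = true ↔ (p.1.2 : ℝ) = yval S p.1.1
    rw [hyq]; exact h2
  refine ⟨κ, ρ, ⟨hsub, ?_, ?_⟩, ?_⟩
  · -- size
    intro S hS
    obtain ⟨c, hcC, hc⟩ := hS
    have hSre : Realizable C S := ⟨c, hcC, hc⟩
    rw [hκ]
    simp only [if_pos hSre, List.length_map]
    exact P2 _ (Tset_realizable hcC hc) (Tset_finSupp S)
  · -- correctness
    intro S hS p hp
    obtain ⟨c, hcC, hc⟩ := hS
    have hSre : Realizable C S := ⟨c, hcC, hc⟩
    have hTeq : κb (Tset (κ S).1) = κb (Tset S) :=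
      key_stab S (κ S).1 hSre (fun _ h => h) (hsub S)
    have hκ1 : (κ S).1 = (κ S).1 := rfl
    have hρS : ρ (κ S) p.1 =
        sSup {y : ℝ | ∃ hy : y ∈ Set.Icc (0:ℝ) 1,
          ρb (κb (Tset S)) (p.1, ⟨y, hy⟩) = true} := by
      rw [hρ]; simp only [hTeq]
    rw [hρS]
    have hcp : c p.1 = p.2 := hc p hp
    have hp2 : p.2 ∈ Set.Icc (0:ℝ) 1 := hcp ▸ hC c hcC p.1
    have hreal := Tset_realizable hcC hc
    have hfin := Tset_finSupp S
    have hset : {y : ℝ | ∃ hy : y ∈ Set.Icc (0:ℝ) 1,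
        ρb (κb (Tset S)) (p.1, ⟨y, hy⟩) = true} = {p.2} := by
      ext y
      simp only [Set.mem_setOf_eq, Set.mem_singleton_iff]
      constructor
      · rintro ⟨hy, hρy⟩
        by_contra hne
        have hmem : ((p.1, (⟨y, hy⟩ : Set.Icc (0:ℝ) 1)), false) ∈ Tset S :=
          ⟨p, hp, rfl, by simp [hne]⟩
        have := P3 _ hreal hfin _ hmem
        simp only at this
        rw [this] at hρy
        exact absurd hρy (by simp)
      · rintro rfl
        refine ⟨hp2, ?_⟩
        have hmem : ((p.1, (⟨p.2, hp2⟩ : Set.Icc (0:ℝ) 1)), true) ∈ Tset S :=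
          ⟨p, hp, rfl, by simp⟩
        exact P3 _ hreal hfin _ hmem
    rw [hset, csSup_singleton]
  · -- stability
    intro S T hS hST hTS
    have hTre : Realizable C T := by
      obtain ⟨c, hcC, hc⟩ := hS
      exact ⟨c, hcC, fun p hp => hc p (hTS hp)⟩
    have hTeq : κb (Tset T) = κb (Tset S) := key_stab S T hS hST hTS
    rw [hκ]
    simp only [if_pos hTre, if_pos hS, hTeq]
    congr 1
    apply List.map_congr_left
    intro p hp
    have hmemS : (p.1.1, yval S p.1.1) ∈ S := key_mem S hS p hp
    have hmemT : (p.1.1, yval S p.1.1) ∈ T := by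
      apply hST
      rw [hκ]
      simp only [if_pos hS, List.mem_map]
      exact ⟨p, hp, rfl⟩
    have : yval T p.1.1 = yval S p.1.1 := yval_eq hTre hmemT
    rw [this]

/-- If `C_Y` (for a real-valued class `C ⊆ [0,1]^X`) admits a stable infinitized
compression scheme of size at most `k`, or a stable inflated compression scheme of size
at most `k`, then `C` admits a stable exact realizable compression scheme of size at
most `k`. -/
theorem regression_exact_stable_of_infinitized_or_inflated {X : Type u}
    (C : Set (X → ℝ)) (hC : ∀ c ∈ C, ∀ x, c x ∈ Set.Icc (0:ℝ) 1) (k : ℕ)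
    (h : (∃ κb ρb, IsInfinitizedScheme (CYr C) k κb ρb ∧ IsStableInf (CYr C) κb) ∨
         (∃ κb ρb, IsInflatedScheme (CYr C) k κb ρb ∧ IsStableInflated (CYr C) κb)) :
    ∃ κ ρ, IsExactRealizableScheme C k κ ρ ∧ IsStable C κ := by
  rcases h with ⟨κb, ρb, ⟨h1, h2, h3⟩, h4⟩ | ⟨κb, ρb, ⟨h1, h2, h3⟩, h4⟩
  · exact exact_stable_of_binary C hC k κb ρb h1 (fun S hS _ => h2 S hS)
      (fun S hS _ => h3 S hS) (fun S T hS _ => h4 S T hS)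
  · exact exact_stable_of_binary C hC k κb ρb h1 h2 h3 h4
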